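/- Let N ≥ 1, let S ⊆ ℝ^N be compact, let D ⊆ ℝ^N be a bounded measurable set, and let ψ_0, …, ψ_N' be an orthonormal family in B_S consisting of eigenfunctions of the operator A_D : B_S → B_S, A_D f = P_S(χ_D f), with eigenvalues λ_0, …, λ_{N'} ∈ (0,1) satisfying λ_n ≥ λ_{N'} for all 0 ≤ n ≤ N'. Let h be in the linear span V of ψ_0, …, ψ_{N'} and suppose T_h^{(D)} maps V into V. Then T_h^{(D)} is a Banach contraction on V with Lipschitz constant 1 − λ_{N'}: for all f, g ∈ V, ‖T_h^{(D)} f − T_h^{(D)} g‖ ≤ (1 − λ_{N'})‖f − g‖, and 0 < 1 − λ_{N'} < 1. -/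

import Mathlib

open MeasureTheory FourierTransform Filter

noncomputable section

/-- The Hilbert space `L²(ℝᴺ; ℂ)` of square-integrable functions on `ℝᴺ`. -/
abbrev L2Space (N : ℕ) : Type :=
  Lp ℂ 2 (volume : Measure (EuclideanSpace ℝ (Fin N)))

/-- `f ∈ L²(ℝᴺ)` is bandlimited to `S`: its Fourier transform vanishes (a.e.) outside `S`;
equivalently, `f` agrees a.e. with the inverse Fourier transform of an integrable function `F`
vanishing outside `S`. -/
def IsBandlimited {N : ℕ} (S : Set (EuclideanSpace ℝ (Fin N))) (f : L2Space N) : Prop :=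
  ∃ F : EuclideanSpace ℝ (Fin N) → ℂ,
    Integrable F ∧ (∀ k, k ∉ S → F k = 0) ∧
      (f : EuclideanSpace ℝ (Fin N) → ℂ) =ᵐ[volume] 𝓕⁻ F

/-- Multiplication of `f ∈ L²` by the indicator function `χ_D`, as an element of `L²`. -/
def chiMul {N : ℕ} {D : Set (EuclideanSpace ℝ (Fin N))} (hD : MeasurableSet D)
    (f : L2Space N) : L2Space N :=
  ((Lp.memLp f).indicator hD).toLp (D.indicator f)

/-- The orthogonal projection of `L²(ℝᴺ)` onto a closed subspace `K`. -/
def projOf {N : ℕ} (K : Submodule ℂ (L2Space N)) (hK : IsClosed (K : Set (L2Space N))) :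
    L2Space N → L2Space N :=
  haveI : CompleteSpace K := hK.completeSpace_coe
  fun f => (K.orthogonalProjectionOnto f : L2Space N)

/-- The operator `T_h^{(D)} f = P_S (f + χ_D (h − f))` (single region). -/
def Tsingle {N : ℕ} (K : Submodule ℂ (L2Space N)) (hK : IsClosed (K : Set (L2Space N)))
    {D : Set (EuclideanSpace ℝ (Fin N))} (hD : MeasurableSet D)
    (h f : L2Space N) : L2Space N :=
  projOf K hK (f + chiMul hD (h - f))


section Aux

variable {N : ℕ} {D : Set (EuclideanSpace ℝ (Fin N))} (hD : MeasurableSet D)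

lemma chiMul_sub (a b : L2Space N) :
    chiMul hD (a - b) = chiMul hD a - chiMul hD b := by
  unfold chiMul
  rw [← MemLp.toLp_sub]
  refine MemLp.toLp_congr _ _ ?_
  filter_upwards [Lp.coeFn_sub a b] with x hx
  by_cases hxd : x ∈ D
  · rw [Pi.sub_apply, Set.indicator_of_mem hxd, Set.indicator_of_mem hxd,
      Set.indicator_of_mem hxd, hx]
    rfl
  · simp [Set.indicator_of_notMem hxd]

lemma chiMul_add (a b : L2Space N) :
    chiMul hD (a + b) = chiMul hD a + chiMul hD b := by
  unfold chiMul
  rw [← MemLp.toLp_add]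
  refine MemLp.toLp_congr _ _ ?_
  filter_upwards [Lp.coeFn_add a b] with x hx
  by_cases hxd : x ∈ D
  · rw [Pi.add_apply, Set.indicator_of_mem hxd, Set.indicator_of_mem hxd,
      Set.indicator_of_mem hxd, hx]
    rfl
  · simp [Set.indicator_of_notMem hxd]

lemma chiMul_smul (c : ℂ) (a : L2Space N) :
    chiMul hD (c • a) = c • chiMul hD a := by
  unfold chiMul
  rw [← MemLp.toLp_const_smul]
  refine MemLp.toLp_congr _ _ ?_
  filter_upwards [Lp.coeFn_smul c a] with x hx
  by_cases hxd : x ∈ D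
  · simp [Set.indicator_of_mem hxd, hx]
  · simp [Set.indicator_of_notMem hxd]

lemma projOf_sub {K : Submodule ℂ (L2Space N)} (hK : IsClosed (K : Set (L2Space N)))
    (a b : L2Space N) : projOf K hK (a - b) = projOf K hK a - projOf K hK b := by
  haveI : CompleteSpace K := hK.completeSpace_coe
  unfold projOf
  rw [map_sub]
  rfl

lemma projOf_add {K : Submodule ℂ (L2Space N)} (hK : IsClosed (K : Set (L2Space N)))
    (a b : L2Space N) : projOf K hK (a + b) = projOf K hK a + projOf K hK b := by
  haveI : CompleteSpace K := hK.completeSpace_coe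
  unfold projOf
  rw [map_add]
  rfl

lemma projOf_smul {K : Submodule ℂ (L2Space N)} (hK : IsClosed (K : Set (L2Space N)))
    (c : ℂ) (a : L2Space N) : projOf K hK (c • a) = c • projOf K hK a := by
  haveI : CompleteSpace K := hK.completeSpace_coe
  unfold projOf
  rw [_root_.map_smul]
  rfl

lemma projOf_mem {K : Submodule ℂ (L2Space N)} (hK : IsClosed (K : Set (L2Space N)))
    {a : L2Space N} (ha : a ∈ K) : projOf K hK a = a := by
  haveI : CompleteSpace K := hK.completeSpace_coe
  unfold projOf
  exact K.starProjection_eq_self_iff.2 ha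

lemma orthonormal_norm_sq_sum {ι : Type*} [Fintype ι] {E : Type*}
    [NormedAddCommGroup E] [InnerProductSpace ℂ E] {v : ι → E}
    (hv : Orthonormal ℂ v) (l : ι → ℂ) :
    ‖∑ i, l i • v i‖ ^ 2 = ∑ i, ‖l i‖ ^ 2 := by
  have h1 := hv.inner_sum l l Finset.univ
  rw [inner_self_eq_norm_sq_to_K] at h1
  have hc : ∀ i, (starRingEnd ℂ) (l i) * l i = ((‖l i‖ : ℂ)) ^ 2 := fun i => by
    rw [RCLike.conj_mul]; norm_cast
  simp_rw [hc] at h1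
  have h2 : ((‖∑ i, l i • v i‖ ^ 2 : ℝ) : ℂ) = ((∑ i, ‖l i‖ ^ 2 : ℝ) : ℂ) := by
    push_cast
    exact h1
  exact_mod_cast h2

end Aux
/-- Let `ψ_0, …, ψ_{N'}` be an orthonormal family in `B_S` of eigenfunctions
of `A_D f = P_S(χ_D f)` with eigenvalues `λ_n ∈ (0,1)` satisfying `λ_n ≥ λ_{N'}` for all `n`.
If `h` lies in the span `V` of the `ψ_n` and `T_h^{(D)}` maps `V` into `V`, then `T_h^{(D)}`
is a Banach contraction on `V` with Lipschitz constant `1 − λ_{N'} ∈ (0,1)`. -/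
theorem truncated_pswf_contraction (N : ℕ) (hN : 1 ≤ N)
    (S : Set (EuclideanSpace ℝ (Fin N))) (hS : IsCompact S)
    (K : Submodule ℂ (L2Space N))
    (hKset : (K : Set (L2Space N)) = {f : L2Space N | IsBandlimited S f})
    (hK : IsClosed (K : Set (L2Space N)))
    (D : Set (EuclideanSpace ℝ (Fin N))) (hD : MeasurableSet D)
    (hDbdd : Bornology.IsBounded D)
    (n' : ℕ) (ψ : Fin (n' + 1) → L2Space N) (hψmem : ∀ n, IsBandlimited S (ψ n))
    (hψon : Orthonormal ℂ ψ)
    (lam : Fin (n' + 1) → ℝ) (hlam : ∀ n, lam n ∈ Set.Ioo (0 : ℝ) 1)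
    (hlast : ∀ n, lam (Fin.last n') ≤ lam n)
    (heig : ∀ n, projOf K hK (chiMul hD (ψ n)) = (lam n : ℂ) • ψ n)
    (h : L2Space N) (hh : h ∈ Submodule.span ℂ (Set.range ψ))
    (hmaps : ∀ f : L2Space N, f ∈ Submodule.span ℂ (Set.range ψ) →
      Tsingle K hK hD h f ∈ Submodule.span ℂ (Set.range ψ)) :
    (∀ f g : L2Space N, f ∈ Submodule.span ℂ (Set.range ψ) →
        g ∈ Submodule.span ℂ (Set.range ψ) →
          ‖Tsingle K hK hD h f - Tsingle K hK hD h g‖ ≤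
            (1 - lam (Fin.last n')) * ‖f - g‖) ∧
      0 < 1 - lam (Fin.last n') ∧ 1 - lam (Fin.last n') < 1 := by
  classical
  have hmemK : ∀ x ∈ Submodule.span ℂ (Set.range ψ), x ∈ K := by
    intro x hx
    refine Submodule.span_le.2 ?_ hx
    rintro _ ⟨n, rfl⟩
    show ψ n ∈ (K : Set (L2Space N))
    rw [hKset]
    exact hψmem n
  have hgt := (hlam (Fin.last n')).1
  have hlt := (hlam (Fin.last n')).2
  refine ⟨?_, by linarith, by linarith⟩
  intro f g hf hg
  set u : L2Space N := f - g with hu_def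
  have hu : u ∈ Submodule.span ℂ (Set.range ψ) := Submodule.sub_mem _ hf hg
  obtain ⟨c, hc⟩ := (Submodule.mem_span_range_iff_exists_fun ℂ).1 hu
  -- the eigen-operator as a linear map
  let A : L2Space N →ₗ[ℂ] L2Space N :=
    { toFun := fun x => projOf K hK (chiMul hD x)
      map_add' := fun a b => by
        show projOf K hK (chiMul hD (a + b)) = _
        rw [chiMul_add hD, projOf_add hK]
      map_smul' := fun m a => by
        show projOf K hK (chiMul hD (m • a)) = _
        simp only [RingHom.id_apply]
        rw [chiMul_smul hD, projOf_smul hK] }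
  have hTdiff : Tsingle K hK hD h f - Tsingle K hK hD h g
      = u - projOf K hK (chiMul hD u) := by
    unfold Tsingle
    rw [← projOf_sub hK]
    have e1 : f + chiMul hD (h - f) - (g + chiMul hD (h - g)) = u - chiMul hD u := by
      rw [chiMul_sub hD h f, chiMul_sub hD h g, hu_def, chiMul_sub hD f g]
      abel
    rw [e1, projOf_sub hK, projOf_mem hK (hmemK u hu)]
  have hAu : projOf K hK (chiMul hD u) = ∑ i, (c i * (lam i : ℂ)) • ψ i := by
    have : projOf K hK (chiMul hD u) = A u := rfl
    rw [this, ← hc, map_sum]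
    refine Finset.sum_congr rfl fun i _ => ?_
    rw [_root_.map_smul]
    have hAψ : A (ψ i) = (lam i : ℂ) • ψ i := heig i
    rw [hAψ, smul_smul]
  have hdiff2 : Tsingle K hK hD h f - Tsingle K hK hD h g
      = ∑ i, (c i * ((1 : ℂ) - (lam i : ℂ))) • ψ i := by
    rw [hTdiff, hAu, ← hc, ← Finset.sum_sub_distrib]
    refine Finset.sum_congr rfl fun i _ => ?_
    rw [← sub_smul]
    ring_nf
  -- norms
  have hnorm1 : ‖Tsingle K hK hD h f - Tsingle K hK hD h g‖ ^ 2
      = ∑ i, ‖c i * ((1 : ℂ) - (lam i : ℂ))‖ ^ 2 := by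
    rw [hdiff2, orthonormal_norm_sq_sum hψon]
  have hnormu : ‖u‖ ^ 2 = ∑ i, ‖c i‖ ^ 2 := by
    rw [← hc, orthonormal_norm_sq_sum hψon]
  have hterm : ∀ i, ‖c i * ((1 : ℂ) - (lam i : ℂ))‖ ^ 2
      ≤ (1 - lam (Fin.last n')) ^ 2 * ‖c i‖ ^ 2 := by
    intro i
    have h1 : ((1 : ℂ) - (lam i : ℂ)) = ((1 - lam i : ℝ) : ℂ) := by push_cast; ring
    rw [norm_mul, h1, Complex.norm_real, Real.norm_eq_abs,
      abs_of_nonneg (by linarith [(hlam i).2])]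
    have hle : (1 - lam i) ≤ 1 - lam (Fin.last n') := by linarith [hlast i]
    have hnn : (0:ℝ) ≤ 1 - lam i := by linarith [(hlam i).2]
    calc (‖c i‖ * (1 - lam i)) ^ 2 = (1 - lam i) ^ 2 * ‖c i‖ ^ 2 := by ring
      _ ≤ (1 - lam (Fin.last n')) ^ 2 * ‖c i‖ ^ 2 := by
          gcongr
  have hsq : ‖Tsingle K hK hD h f - Tsingle K hK hD h g‖ ^ 2
      ≤ ((1 - lam (Fin.last n')) * ‖u‖) ^ 2 := by
    rw [hnorm1, mul_pow, hnormu, Finset.mul_sum]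
    exact Finset.sum_le_sum fun i _ => hterm i
  have hfin := Real.sqrt_le_sqrt hsq
  rwa [Real.sqrt_sq (norm_nonneg _),
    Real.sqrt_sq (mul_nonneg (by linarith) (norm_nonneg _))] at hfin
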